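/- Pinsker's inequality (finite form): Let Ω be a finite set and let p, q be probability mass functions on Ω with q(x) > 0 for all x ∈ Ω. Then for every event A ⊆ Ω, 2·(p(A) − q(A))² ≤ KL(p, q). -/

import Mathlib

open Real

noncomputable def phiAux (t : ℝ) : ℝ := Real.log t - 3/2 * ((t^2 + 4*t - 5)/(t+2)^2)
noncomputable def gAux (t : ℝ) : ℝ := t * Real.log t - t + 1 - 3/2 * ((t-1)^2/(t+2))

lemma hasDerivAt_phiAux {t : ℝ} (ht : 0 < t) :
    HasDerivAt phiAux (1/t - 27/(t+2)^3) t := by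
  have hne : (t+2)^2 ≠ 0 := by positivity
  have h1 : HasDerivAt Real.log t⁻¹ t := Real.hasDerivAt_log ht.ne'
  have h2 : HasDerivAt (fun x : ℝ => x^2 + 4*x - 5) (2*t + 4) t := by
    have := ((hasDerivAt_pow 2 t).add ((hasDerivAt_id t).const_mul 4)).sub_const 5
    refine HasDerivAt.congr_deriv this ?_
    push_cast [id_eq]; ring
  have h3 : HasDerivAt (fun x : ℝ => (x+2)^2) (2*(t+2)) t := by
    have := ((hasDerivAt_id t).add_const 2).pow 2
    refine HasDerivAt.congr_deriv this ?_
    push_cast [id_eq]; ring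
  have hdiv := h2.div h3 hne
  have := h1.sub (hdiv.const_mul (3/2))
  refine HasDerivAt.congr_deriv this ?_
  field_simp
  ring

lemma hasDerivAt_gAux {t : ℝ} (ht : 0 < t) :
    HasDerivAt gAux (phiAux t) t := by
  have hne : t + 2 ≠ 0 := by positivity
  have h1 : HasDerivAt (fun x : ℝ => x * Real.log x) (Real.log t + 1) t :=
    Real.hasDerivAt_mul_log ht.ne'
  have h2 : HasDerivAt (fun x : ℝ => (x-1)^2) (2*(t-1)) t := by
    have := ((hasDerivAt_id t).sub_const 1).pow 2
    refine HasDerivAt.congr_deriv this ?_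
    push_cast [id_eq]; ring
  have h3 : HasDerivAt (fun x : ℝ => x + 2) 1 t := (hasDerivAt_id t).add_const 2
  have hdiv := h2.div h3 hne
  have := (((h1.sub (hasDerivAt_id t)).add_const 1).sub (hdiv.const_mul (3/2)))
  refine HasDerivAt.congr_deriv this ?_
  unfold phiAux
  field_simp
  ring

lemma phiAux_one : phiAux 1 = 0 := by unfold phiAux; norm_num

lemma gAux_one : gAux 1 = 0 := by unfold gAux; norm_num

lemma deriv_phi_nonneg {t : ℝ} (ht : 0 < t) : 0 ≤ 1/t - 27/(t+2)^3 := by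
  rw [sub_nonneg, div_le_div_iff₀ (by positivity) ht]
  nlinarith [sq_nonneg (t-1), ht.le]

lemma phiAux_nonneg {t : ℝ} (ht : 1 ≤ t) : 0 ≤ phiAux t := by
  have hmono : MonotoneOn phiAux (Set.Ici 1) := by
    apply monotoneOn_of_deriv_nonneg (convex_Ici 1)
    · exact fun x hx => (hasDerivAt_phiAux (lt_of_lt_of_le one_pos hx)).continuousAt.continuousWithinAt
    · intro x hx
      rw [interior_Ici] at hx
      exact (hasDerivAt_phiAux (lt_trans one_pos hx)).differentiableAt.differentiableWithinAt
    · intro x hx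
      rw [interior_Ici] at hx
      have h0 : (0:ℝ) < x := lt_trans one_pos hx
      rw [(hasDerivAt_phiAux h0).deriv]
      exact deriv_phi_nonneg h0
  have := hmono (Set.self_mem_Ici) (Set.mem_Ici.mpr ht) ht
  rwa [phiAux_one] at this

lemma phiAux_nonpos {t : ℝ} (ht0 : 0 < t) (ht : t ≤ 1) : phiAux t ≤ 0 := by
  have hmono : MonotoneOn phiAux (Set.Icc t 1) := by
    apply monotoneOn_of_deriv_nonneg (convex_Icc t 1)
    · exact fun x hx => (hasDerivAt_phiAux (lt_of_lt_of_le ht0 hx.1)).continuousAt.continuousWithinAt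
    · intro x hx
      rw [interior_Icc] at hx
      exact (hasDerivAt_phiAux (lt_trans ht0 hx.1)).differentiableAt.differentiableWithinAt
    · intro x hx
      rw [interior_Icc] at hx
      have h0 : (0:ℝ) < x := lt_trans ht0 hx.1
      rw [(hasDerivAt_phiAux h0).deriv]
      exact deriv_phi_nonneg h0
  have := hmono (Set.mem_Icc.mpr ⟨le_refl t, ht⟩) (Set.mem_Icc.mpr ⟨ht, le_refl 1⟩) ht
  rwa [phiAux_one] at this

lemma gAux_nonneg {t : ℝ} (ht : 0 < t) : 0 ≤ gAux t := by
  rcases le_or_gt 1 t with h1 | h1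
  · have hmono : MonotoneOn gAux (Set.Ici 1) := by
      apply monotoneOn_of_deriv_nonneg (convex_Ici 1)
      · exact fun x hx => (hasDerivAt_gAux (lt_of_lt_of_le one_pos hx)).continuousAt.continuousWithinAt
      · intro x hx
        rw [interior_Ici] at hx
        exact (hasDerivAt_gAux (lt_trans one_pos hx)).differentiableAt.differentiableWithinAt
      · intro x hx
        rw [interior_Ici] at hx
        rw [(hasDerivAt_gAux (lt_trans one_pos hx)).deriv]
        exact phiAux_nonneg hx.le
    have := hmono Set.self_mem_Ici (Set.mem_Ici.mpr h1) h1
    rwa [gAux_one] at this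
  · have hmono : AntitoneOn gAux (Set.Icc t 1) := by
      apply antitoneOn_of_deriv_nonpos (convex_Icc t 1)
      · exact fun x hx => (hasDerivAt_gAux (lt_of_lt_of_le ht hx.1)).continuousAt.continuousWithinAt
      · intro x hx
        rw [interior_Icc] at hx
        exact (hasDerivAt_gAux (lt_trans ht hx.1)).differentiableAt.differentiableWithinAt
      · intro x hx
        rw [interior_Icc] at hx
        rw [(hasDerivAt_gAux (lt_trans ht hx.1)).deriv]
        exact phiAux_nonpos (lt_trans ht hx.1) hx.2.le
    have := hmono (Set.mem_Icc.mpr ⟨le_refl t, h1.le⟩) (Set.mem_Icc.mpr ⟨h1.le, le_refl 1⟩) h1.le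
    rwa [gAux_one] at this

lemma pointwise_bound {p q : ℝ} (hp : 0 ≤ p) (hq : 0 < q) :
    3*(p-q)^2/(2*(p+2*q)) ≤ p * Real.log (p/q) - p + q := by
  rcases eq_or_lt_of_le hp with h0 | h0
  · rw [← h0]
    simp [Real.log_zero]
    rw [div_le_iff₀ (by positivity)]
    nlinarith [hq.le]
  · have ht : 0 < p/q := div_pos h0 hq
    have hg := gAux_nonneg ht
    have hne : q ≠ 0 := hq.ne'
    have hd : (0:ℝ) < p + 2*q := by linarith
    have key : q * gAux (p/q) = (p * Real.log (p/q) - p + q) - 3*(p-q)^2/(2*(p+2*q)) := by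
      unfold gAux
      have h2 : p/q + 2 ≠ 0 := by positivity
      field_simp
    nlinarith [mul_nonneg hq.le hg]


/-- **Pinsker's inequality (finite form).**
For probability mass functions `p, q` on a finite set `Ω` with `q x > 0` for all `x`,
and any event `A ⊆ Ω`, we have `2 * (p(A) - q(A))^2 ≤ KL(p, q)`,
where `KL(p,q) = ∑ x, p x * log (p x / q x)`. -/
theorem pinsker_finite {Ω : Type*} [Fintype Ω] (p q : Ω → ℝ)
    (hp0 : ∀ x, 0 ≤ p x) (hp1 : ∑ x, p x = 1)
    (hq0 : ∀ x, 0 < q x) (hq1 : ∑ x, q x = 1)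
    (A : Finset Ω) :
    2 * ((∑ x ∈ A, p x) - ∑ x ∈ A, q x) ^ 2 ≤ ∑ x, p x * Real.log (p x / q x) := by
  classical
  set d : Ω → ℝ := fun x => p x - q x with hd
  set w : Ω → ℝ := fun x => 2*(p x + 2*q x)/3 with hw
  have hwpos : ∀ x, 0 < w x := fun x => by
    have := hp0 x; have := hq0 x; simp only [hw]; positivity
  -- sum of weights is 2
  have hsw : ∑ x, w x = 2 := by
    have hwx : ∀ x, w x = 2/3*p x + 4/3*q x := fun x => by simp only [hw]; ring
    rw [Finset.sum_congr rfl (fun x _ => hwx x), Finset.sum_add_distrib,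
      ← Finset.mul_sum, ← Finset.mul_sum, hp1, hq1]
    norm_num
  set S : ℝ := ∑ x, |d x| with hS
  -- Titu / Cauchy-Schwarz
  have titu : S^2/2 ≤ ∑ x, (d x)^2 / w x := by
    have h := Finset.sq_sum_div_le_sum_sq_div Finset.univ (fun x => |d x|)
      (fun x _ => hwpos x)
    rw [hsw] at h
    simpa [sq_abs] using h
  -- each term bounded by the KL integrand plus linear part
  have hterm : ∀ x, (d x)^2 / w x ≤ p x * Real.log (p x / q x) - p x + q x := by
    intro x
    have h := pointwise_bound (hp0 x) (hq0 x)
    have hne : (0:ℝ) < p x + 2*q x := by have := hp0 x; have := hq0 x; linarith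
    have : (d x)^2 / w x = 3*(p x - q x)^2/(2*(p x + 2*q x)) := by
      simp only [hd, hw]
      rw [div_eq_div_iff (by positivity) (by positivity)]
      ring
    rw [this]
    exact h
  have hsum2 : ∑ x, (d x)^2 / w x ≤ ∑ x, p x * Real.log (p x / q x) := by
    calc ∑ x, (d x)^2 / w x ≤ ∑ x, (p x * Real.log (p x / q x) - p x + q x) :=
          Finset.sum_le_sum (fun x _ => hterm x)
      _ = (∑ x, p x * Real.log (p x / q x)) - (∑ x, p x) + (∑ x, q x) := by
          rw [Finset.sum_add_distrib, Finset.sum_sub_distrib]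
      _ = ∑ x, p x * Real.log (p x / q x) := by rw [hp1, hq1]; ring
  -- 2|p(A) - q(A)| ≤ S
  set Δ : ℝ := (∑ x ∈ A, p x) - ∑ x ∈ A, q x with hΔ
  have hAd : ∑ x ∈ A, d x = Δ := by rw [hΔ, ← Finset.sum_sub_distrib]
  have htot : ∑ x, d x = 0 := by
    rw [hd]; rw [Finset.sum_sub_distrib, hp1, hq1]; ring
  have hAc : ∑ x ∈ Finset.univ \ A, d x = -Δ := by
    have := Finset.sum_sdiff (Finset.subset_univ A) (f := d)
    rw [htot, hAd] at this
    linarith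
  have habs : 2 * |Δ| ≤ S := by
    have h1 : |Δ| ≤ ∑ x ∈ A, |d x| := by
      rw [← hAd]; exact Finset.abs_sum_le_sum_abs _ _
    have h2 : |Δ| ≤ ∑ x ∈ Finset.univ \ A, |d x| := by
      have : |(-Δ)| ≤ ∑ x ∈ Finset.univ \ A, |d x| := by
        rw [← hAc]; exact Finset.abs_sum_le_sum_abs _ _
      rwa [abs_neg] at this
    have hsplit : S = (∑ x ∈ Finset.univ \ A, |d x|) + ∑ x ∈ A, |d x| :=
      (Finset.sum_sdiff (Finset.subset_univ A)).symm
    linarith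
  -- conclude
  have hΔabs : 2 * Δ^2 ≤ S^2/2 := by
    have h0 : 0 ≤ 2*|Δ| := by positivity
    have h1 : (2*|Δ|)^2 ≤ S^2 := by
      have hS0 : 0 ≤ S := le_trans h0 habs
      exact pow_le_pow_left₀ h0 habs 2
    have h2 : (2*|Δ|)^2 = 4*Δ^2 := by rw [mul_pow, sq_abs]; norm_num
    rw [h2] at h1
    clear_value S Δ
    linarith
  calc 2 * Δ^2 ≤ S^2/2 := hΔabs
    _ ≤ ∑ x, (d x)^2 / w x := titu
    _ ≤ ∑ x, p x * Real.log (p x / q x) := hsum2
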